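/- Let S = k[X, Y] be the polynomial ring over a field k and set R₁ = k[X², XY, Y², X³, Y³] ⊆ S. Then S is the integral closure of R₁ in its field of fractions, and R₁ is strictly closed (in S), hence weakly Arf. -/

import Mathlib

open scoped TensorProduct

open MvPolynomial

/-- `R` is a weakly Arf ring. -/
def IsWeaklyArf (R : Type*) [CommRing R] : Prop :=
  ∀ x y z : R, x ∈ nonZeroDivisors R →
    (∃ u ∈ integralClosure R (FractionRing R),
        u * algebraMap R (FractionRing R) x = algebraMap R (FractionRing R) y) →
    (∃ v ∈ integralClosure R (FractionRing R),
        v * algebraMap R (FractionRing R) x = algebraMap R (FractionRing R) z) →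
    ∃ r : R, algebraMap R (FractionRing R) r * algebraMap R (FractionRing R) x
        = algebraMap R (FractionRing R) (y * z)

/-- `R` is strictly closed in the `R`-algebra `S`. -/
def IsStrictlyClosedIn (R S : Type*) [CommRing R] [CommRing S] [Algebra R S] : Prop :=
  ∀ s : S, s ⊗ₜ[R] (1 : S) = (1 : S) ⊗ₜ[R] s → s ∈ (algebraMap R S).range

/-- `R₁ = k[X², XY, Y², X³, Y³]` inside `S = k[X, Y]`. -/
noncomputable def R₁alg (k : Type*) [Field k] : Subalgebra k (MvPolynomial (Fin 2) k) :=
  Algebra.adjoin k {X 0 ^ 2, X 0 * X 1, X 1 ^ 2, X 0 ^ 3, X 1 ^ 3}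


section Aux

open MvPolynomial

variable (k : Type*) [Field k]

private lemma g1 : (X 0 : MvPolynomial (Fin 2) k) ^ 2 ∈ R₁alg k := Algebra.subset_adjoin (by simp)
private lemma g2 : (X 0 : MvPolynomial (Fin 2) k) * X 1 ∈ R₁alg k := Algebra.subset_adjoin (by simp)
private lemma g3 : (X 1 : MvPolynomial (Fin 2) k) ^ 2 ∈ R₁alg k := Algebra.subset_adjoin (by simp)
private lemma g4 : (X 0 : MvPolynomial (Fin 2) k) ^ 3 ∈ R₁alg k := Algebra.subset_adjoin (by simp)
private lemma g5 : (X 1 : MvPolynomial (Fin 2) k) ^ 3 ∈ R₁alg k := Algebra.subset_adjoin (by simp)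

private lemma m00 : (X 0 : MvPolynomial (Fin 2) k) ^ 0 * X 1 ^ 0 ∈ R₁alg k := by
  simpa using one_mem (R₁alg k)
private lemma m20 : (X 0 : MvPolynomial (Fin 2) k) ^ 2 * X 1 ^ 0 ∈ R₁alg k := by simpa using g1 k
private lemma m11 : (X 0 : MvPolynomial (Fin 2) k) ^ 1 * X 1 ^ 1 ∈ R₁alg k := by simpa using g2 k
private lemma m02 : (X 0 : MvPolynomial (Fin 2) k) ^ 0 * X 1 ^ 2 ∈ R₁alg k := by simpa using g3 k
private lemma m30 : (X 0 : MvPolynomial (Fin 2) k) ^ 3 * X 1 ^ 0 ∈ R₁alg k := by simpa using g4 k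
private lemma m03 : (X 0 : MvPolynomial (Fin 2) k) ^ 0 * X 1 ^ 3 ∈ R₁alg k := by simpa using g5 k
private lemma m40 : (X 0 : MvPolynomial (Fin 2) k) ^ 4 * X 1 ^ 0 ∈ R₁alg k := by
  rw [show (X 0 : MvPolynomial (Fin 2) k) ^ 4 * X 1 ^ 0 = X 0 ^ 2 * X 0 ^ 2 by ring]
  exact mul_mem (g1 k) (g1 k)
private lemma m31 : (X 0 : MvPolynomial (Fin 2) k) ^ 3 * X 1 ^ 1 ∈ R₁alg k := by
  rw [show (X 0 : MvPolynomial (Fin 2) k) ^ 3 * X 1 ^ 1 = X 0 ^ 2 * (X 0 * X 1) by ring]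
  exact mul_mem (g1 k) (g2 k)
private lemma m22 : (X 0 : MvPolynomial (Fin 2) k) ^ 2 * X 1 ^ 2 ∈ R₁alg k :=
  mul_mem (g1 k) (g3 k)
private lemma m13 : (X 0 : MvPolynomial (Fin 2) k) ^ 1 * X 1 ^ 3 ∈ R₁alg k := by
  rw [show (X 0 : MvPolynomial (Fin 2) k) ^ 1 * X 1 ^ 3 = X 0 * X 1 * X 1 ^ 2 by ring]
  exact mul_mem (g2 k) (g3 k)
private lemma m04 : (X 0 : MvPolynomial (Fin 2) k) ^ 0 * X 1 ^ 4 ∈ R₁alg k := by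
  rw [show (X 0 : MvPolynomial (Fin 2) k) ^ 0 * X 1 ^ 4 = X 1 ^ 2 * X 1 ^ 2 by ring]
  exact mul_mem (g3 k) (g3 k)
private lemma m50 : (X 0 : MvPolynomial (Fin 2) k) ^ 5 * X 1 ^ 0 ∈ R₁alg k := by
  rw [show (X 0 : MvPolynomial (Fin 2) k) ^ 5 * X 1 ^ 0 = X 0 ^ 2 * X 0 ^ 3 by ring]
  exact mul_mem (g1 k) (g4 k)
private lemma m41 : (X 0 : MvPolynomial (Fin 2) k) ^ 4 * X 1 ^ 1 ∈ R₁alg k := by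
  rw [show (X 0 : MvPolynomial (Fin 2) k) ^ 4 * X 1 ^ 1 = X 0 * X 1 * X 0 ^ 3 by ring]
  exact mul_mem (g2 k) (g4 k)
private lemma m32 : (X 0 : MvPolynomial (Fin 2) k) ^ 3 * X 1 ^ 2 ∈ R₁alg k := by
  rw [show (X 0 : MvPolynomial (Fin 2) k) ^ 3 * X 1 ^ 2 = X 1 ^ 2 * X 0 ^ 3 by ring]
  exact mul_mem (g3 k) (g4 k)
private lemma m23 : (X 0 : MvPolynomial (Fin 2) k) ^ 2 * X 1 ^ 3 ∈ R₁alg k :=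
  mul_mem (g1 k) (g5 k)
private lemma m14 : (X 0 : MvPolynomial (Fin 2) k) ^ 1 * X 1 ^ 4 ∈ R₁alg k := by
  rw [show (X 0 : MvPolynomial (Fin 2) k) ^ 1 * X 1 ^ 4 = X 0 * X 1 * X 1 ^ 3 by ring]
  exact mul_mem (g2 k) (g5 k)
private lemma m05 : (X 0 : MvPolynomial (Fin 2) k) ^ 0 * X 1 ^ 5 ∈ R₁alg k := by
  rw [show (X 0 : MvPolynomial (Fin 2) k) ^ 0 * X 1 ^ 5 = X 1 ^ 2 * X 1 ^ 3 by ring]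
  exact mul_mem (g3 k) (g5 k)

/-- a monomial not among `X, Y, X²Y, XY²` lies in `R₁` -/
private lemma mono_mem_aux : ∀ (n a b : ℕ), a + b = n →
    ¬((a = 1 ∧ b = 0) ∨ (a = 0 ∧ b = 1) ∨ (a = 2 ∧ b = 1) ∨ (a = 1 ∧ b = 2)) →
    (X 0 : MvPolynomial (Fin 2) k) ^ a * X 1 ^ b ∈ R₁alg k := by
  intro n
  induction n using Nat.strong_induction_on with
  | _ n IH =>
    intro a b hab hbad
    rcases Nat.lt_or_ge n 6 with h6 | h6
    · have ha : a ≤ 5 := by omega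
      have hb : b ≤ 5 := by omega
      interval_cases a <;> interval_cases b <;>
        first
          | (exfalso; omega)
          | with_reducible exact m00 k | with_reducible exact m20 k | with_reducible exact m11 k
          | with_reducible exact m02 k | with_reducible exact m30 k
          | with_reducible exact m03 k | with_reducible exact m40 k | with_reducible exact m31 k
          | with_reducible exact m22 k | with_reducible exact m13 k
          | with_reducible exact m04 k | with_reducible exact m50 k | with_reducible exact m41 k
          | with_reducible exact m32 k | with_reducible exact m23 k
          | with_reducible exact m14 k | with_reducible exact m05 k
    · by_cases ha : 2 ≤ a
      · obtain ⟨a', rfl⟩ : ∃ a', a = 2 + a' := ⟨a - 2, by omega⟩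
        have h := IH (n - 2) (by omega) a' b (by omega) (by omega)
        rw [show (X 0 : MvPolynomial (Fin 2) k) ^ (2 + a') * X 1 ^ b
            = X 0 ^ 2 * (X 0 ^ a' * X 1 ^ b) by ring]
        exact mul_mem (g1 k) h
      · obtain ⟨b', rfl⟩ : ∃ b', b = 2 + b' := ⟨b - 2, by omega⟩
        have h := IH (n - 2) (by omega) a b' (by omega) (by omega)
        rw [show (X 0 : MvPolynomial (Fin 2) k) ^ a * X 1 ^ (2 + b')
            = X 1 ^ 2 * (X 0 ^ a * X 1 ^ b') by ring]
        exact mul_mem (g3 k) h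

private lemma mono_mem (a b : ℕ)
    (h : ¬((a = 1 ∧ b = 0) ∨ (a = 0 ∧ b = 1) ∨ (a = 2 ∧ b = 1) ∨ (a = 1 ∧ b = 2))) :
    (X 0 : MvPolynomial (Fin 2) k) ^ a * X 1 ^ b ∈ R₁alg k :=
  mono_mem_aux k (a + b) a b rfl h

private lemma monomial_eq_prod (d : Fin 2 →₀ ℕ) (c : k) :
    (monomial d c : MvPolynomial (Fin 2) k) = C c * (X 0 ^ d 0 * X 1 ^ d 1) := by
  rw [monomial_eq]
  congr 1
  rw [Finsupp.prod_fintype _ _ (fun i => pow_zero _), Fin.prod_univ_two]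

private lemma conductor_mem (f : MvPolynomial (Fin 2) k) : (X 0) ^ 4 * f ∈ R₁alg k := by
  rw [f.as_sum, Finset.mul_sum]
  refine sum_mem fun d hd => ?_
  rw [monomial_eq_prod, show (X 0 : MvPolynomial (Fin 2) k) ^ 4
      * (C (coeff d f) * (X 0 ^ d 0 * X 1 ^ d 1))
      = C (coeff d f) * (X 0 ^ (4 + d 0) * X 1 ^ d 1) by ring]
  exact mul_mem ((R₁alg k).algebraMap_mem' _) (mono_mem k _ _ (by omega))

private lemma span_top :
    Submodule.span (R₁alg k) ({1, X 0, X 1} : Set (MvPolynomial (Fin 2) k)) = ⊤ := by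
  rw [eq_top_iff]
  intro f _
  rw [f.as_sum]
  refine sum_mem fun d _ => ?_
  rw [monomial_eq_prod]
  set c := coeff d f
  by_cases hbad : (d 0 = 1 ∧ d 1 = 0) ∨ (d 0 = 0 ∧ d 1 = 1) ∨ (d 0 = 2 ∧ d 1 = 1)
      ∨ (d 0 = 1 ∧ d 1 = 2)
  · rcases hbad with ⟨h0, h1⟩ | ⟨h0, h1⟩ | ⟨h0, h1⟩ | ⟨h0, h1⟩ <;> rw [h0, h1]
    · rw [show (C c : MvPolynomial (Fin 2) k) * (X 0 ^ 1 * X 1 ^ 0) = C c * X 0 by ring]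
      exact Submodule.smul_mem _ (⟨C c, (R₁alg k).algebraMap_mem' _⟩ : R₁alg k)
        (Submodule.subset_span (by simp))
    · rw [show (C c : MvPolynomial (Fin 2) k) * (X 0 ^ 0 * X 1 ^ 1) = C c * X 1 by ring]
      exact Submodule.smul_mem _ (⟨C c, (R₁alg k).algebraMap_mem' _⟩ : R₁alg k)
        (Submodule.subset_span (by simp))
    · rw [show (C c : MvPolynomial (Fin 2) k) * (X 0 ^ 2 * X 1 ^ 1)
          = (C c * (X 0 * X 1)) * X 0 by ring]
      exact Submodule.smul_mem _
        (⟨C c * (X 0 * X 1), mul_mem ((R₁alg k).algebraMap_mem' _) (g2 k)⟩ : R₁alg k)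
        (Submodule.subset_span (by simp))
    · rw [show (C c : MvPolynomial (Fin 2) k) * (X 0 ^ 1 * X 1 ^ 2)
          = (C c * (X 0 * X 1)) * X 1 by ring]
      exact Submodule.smul_mem _
        (⟨C c * (X 0 * X 1), mul_mem ((R₁alg k).algebraMap_mem' _) (g2 k)⟩ : R₁alg k)
        (Submodule.subset_span (by simp))
  · rw [show (C c : MvPolynomial (Fin 2) k) * (X 0 ^ d 0 * X 1 ^ d 1)
        = (C c * (X 0 ^ d 0 * X 1 ^ d 1)) * 1 by ring]
    exact Submodule.smul_mem _
      (⟨_, mul_mem ((R₁alg k).algebraMap_mem' _) (mono_mem k _ _ hbad)⟩ : R₁alg k)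
      (Submodule.subset_span (by simp))

instance : Module.Finite (R₁alg k) (MvPolynomial (Fin 2) k) :=
  ⟨Submodule.fg_def.mpr ⟨{1, X 0, X 1},
    (Set.finite_singleton _).insert _ |>.insert _, span_top k⟩⟩

instance : Algebra.IsIntegral (R₁alg k) (MvPolynomial (Fin 2) k) :=
  Algebra.IsIntegral.of_finite _ _

set_option maxHeartbeats 1000000 in
set_option synthInstance.maxHeartbeats 1000000 in
private lemma lemA (K : Type*) [Field K] [Algebra (MvPolynomial (Fin 2) k) K]
    [IsFractionRing (MvPolynomial (Fin 2) k) K] :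
    letI : Algebra (R₁alg k) K :=
      ((algebraMap (MvPolynomial (Fin 2) k) K).comp (R₁alg k).val.toRingHom).toAlgebra
    IsFractionRing (R₁alg k) K := by
  letI : Algebra (R₁alg k) K :=
    ((algebraMap (MvPolynomial (Fin 2) k) K).comp (R₁alg k).val.toRingHom).toAlgebra
  have halg : (algebraMap (R₁alg k) K) =
      (algebraMap (MvPolynomial (Fin 2) k) K).comp (R₁alg k).val.toRingHom := rfl
  have hinj : Function.Injective (algebraMap (R₁alg k) K) := by
    rw [halg]
    exact (IsFractionRing.injective (MvPolynomial (Fin 2) k) K).comp Subtype.val_injective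
  constructor
  constructor
  · rintro ⟨r, hr⟩
    refine isUnit_iff_ne_zero.mpr ?_
    simp only [ne_eq, map_eq_zero_iff _ hinj]
    exact nonZeroDivisors.ne_zero hr
  · intro z
    obtain ⟨⟨p, q⟩, hq⟩ := IsLocalization.surj (nonZeroDivisors (MvPolynomial (Fin 2) k)) z
    have hq0 : (q : MvPolynomial (Fin 2) k) ≠ 0 := nonZeroDivisors.coe_ne_zero q
    have hX4 : (X 0 : MvPolynomial (Fin 2) k) ^ 4 ≠ 0 := pow_ne_zero _ (X_ne_zero 0)
    refine ⟨⟨⟨(X 0 : MvPolynomial (Fin 2) k) ^ 4 * p, conductor_mem k p⟩,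
      ⟨⟨(X 0 : MvPolynomial (Fin 2) k) ^ 4 * q, conductor_mem k q⟩, ?_⟩⟩, ?_⟩
    · refine mem_nonZeroDivisors_iff_ne_zero.mpr ?_
      intro h
      exact (mul_ne_zero hX4 hq0) (congrArg Subtype.val h)
    · simp only [halg, RingHom.comp_apply]
      show z * algebraMap (MvPolynomial (Fin 2) k) K ((X 0 : MvPolynomial (Fin 2) k) ^ 4 * ↑q)
        = algebraMap (MvPolynomial (Fin 2) k) K ((X 0 : MvPolynomial (Fin 2) k) ^ 4 * p)
      rw [map_mul, map_mul, ← mul_assoc, mul_comm z, mul_assoc, hq]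
  · intro x y h
    exact ⟨1, by simpa using hinj h⟩

set_option maxHeartbeats 1000000 in
set_option synthInstance.maxHeartbeats 1000000 in
private lemma lemB (K : Type*) [Field K] [Algebra (MvPolynomial (Fin 2) k) K]
    [IsFractionRing (MvPolynomial (Fin 2) k) K] :
    letI : Algebra (R₁alg k) K :=
      ((algebraMap (MvPolynomial (Fin 2) k) K).comp (R₁alg k).val.toRingHom).toAlgebra
    (integralClosure (R₁alg k) K : Set K)
      = Set.range (algebraMap (MvPolynomial (Fin 2) k) K) := by
  letI : Algebra (R₁alg k) K :=
    ((algebraMap (MvPolynomial (Fin 2) k) K).comp (R₁alg k).val.toRingHom).toAlgebra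
  haveI T1 : @IsScalarTower (R₁alg k) (MvPolynomial (Fin 2) k) K Algebra.toSMul Algebra.toSMul
      Algebra.toSMul :=
    IsScalarTower.of_algebraMap_eq (R := R₁alg k) (S := MvPolynomial (Fin 2) k) (A := K)
      (fun x => rfl)
  haveI T2 : IsScalarTower (R₁alg k) (MvPolynomial (Fin 2) k) K := ⟨fun r s x => by
    rw [Subalgebra.smul_def r s, Subalgebra.smul_def r (s • x), smul_eq_mul, mul_smul]⟩
  ext u
  constructor
  · intro hu
    have h1 : IsIntegral (MvPolynomial (Fin 2) k) u :=
      IsIntegral.tower_top (A := MvPolynomial (Fin 2) k) hu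
    obtain ⟨y, hy⟩ := IsIntegrallyClosed.isIntegral_iff.mp h1
    exact ⟨y, hy⟩
  · rintro ⟨y, rfl⟩
    exact IsIntegral.algebraMap (Algebra.IsIntegral.isIntegral (R := R₁alg k) y)

end Aux

section StrictClosure

open MvPolynomial

/-- exponent vector `(a, b)` -/
private noncomputable def ee (a b : ℕ) : Fin 2 →₀ ℕ := Finsupp.single 0 a + Finsupp.single 1 b

private lemma ee_apply0 (a b : ℕ) : ee a b 0 = a := by simp [ee]
private lemma ee_apply1 (a b : ℕ) : ee a b 1 = b := by simp [ee, Finsupp.single_apply]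
private lemma ee_zero : ee 0 0 = 0 := by simp [ee]
private lemma ee_le {a b c d : ℕ} : ee a b ≤ ee c d ↔ a ≤ c ∧ b ≤ d := by
  constructor
  · intro h
    exact ⟨by simpa [ee_apply0] using h 0, by simpa [ee_apply1] using h 1⟩
  · intro ⟨h1, h2⟩ i
    fin_cases i <;> simpa [ee_apply0, ee_apply1]
private lemma ee_sub (a b c d : ℕ) : ee c d - ee a b = ee (c - a) (d - b) := by
  ext i; fin_cases i <;> simp [Finsupp.tsub_apply, ee_apply0, ee_apply1]

variable {k : Type*} [Field k]

private lemma Xpow_mul_eq (a b : ℕ) :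
    (X 0 : MvPolynomial (Fin 2) k) ^ a * X 1 ^ b = monomial (ee a b) 1 := by
  rw [X_pow_eq_monomial, X_pow_eq_monomial, monomial_mul, one_mul]; rfl

private lemma coeff_ee (a b c d : ℕ) (f : MvPolynomial (Fin 2) k) :
    coeff (ee c d) ((X 0 : MvPolynomial (Fin 2) k) ^ a * X 1 ^ b * f)
      = if a ≤ c ∧ b ≤ d then coeff (ee (c - a) (d - b)) f else 0 := by
  rw [Xpow_mul_eq, coeff_monomial_mul']
  by_cases h : a ≤ c ∧ b ≤ d
  · rw [if_pos (ee_le.mpr h), if_pos h, ee_sub, one_mul]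
  · rw [if_neg (fun hh => h (ee_le.mp hh)), if_neg h]

/-- bilinear form given by a list of pairs of exponent vectors -/
private noncomputable def Bl (L : List ((ℕ × ℕ) × (ℕ × ℕ)))
    (f g : MvPolynomial (Fin 2) k) : k :=
  (L.map fun p => coeff (ee p.1.1 p.1.2) f * coeff (ee p.2.1 p.2.2) g).sum

private lemma Bl_add_left (L) (f f' g : MvPolynomial (Fin 2) k) :
    Bl L (f + f') g = Bl L f g + Bl L f' g := by
  induction L with
  | nil => simp [Bl]
  | cons p t ih => simp only [Bl, List.map_cons, List.sum_cons] at *; rw [ih]; rw [coeff_add]; ring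

private lemma Bl_add_right (L) (f g g' : MvPolynomial (Fin 2) k) :
    Bl L f (g + g') = Bl L f g + Bl L f g' := by
  induction L with
  | nil => simp [Bl]
  | cons p t ih => simp only [Bl, List.map_cons, List.sum_cons] at *; rw [ih]; rw [coeff_add]; ring

private lemma Bl_C_left (L) (c : k) (f g : MvPolynomial (Fin 2) k) :
    Bl L (C c * f) g = c * Bl L f g := by
  induction L with
  | nil => simp [Bl]
  | cons p t ih => simp only [Bl, List.map_cons, List.sum_cons] at *; rw [ih, coeff_C_mul]; ring

private lemma Bl_C_right (L) (c : k) (f g : MvPolynomial (Fin 2) k) :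
    Bl L f (C c * g) = c * Bl L f g := by
  induction L with
  | nil => simp [Bl]
  | cons p t ih => simp only [Bl, List.map_cons, List.sum_cons] at *; rw [ih, coeff_C_mul]; ring

private lemma Bl_zero_left (L) (g : MvPolynomial (Fin 2) k) : Bl L 0 g = 0 := by
  induction L with
  | nil => simp [Bl]
  | cons p t ih => simp only [Bl, List.map_cons, List.sum_cons] at *; rw [ih, coeff_zero]; ring

private lemma Bl_zero_right (L) (f : MvPolynomial (Fin 2) k) : Bl L f 0 = 0 := by
  induction L with
  | nil => simp [Bl]
  | cons p t ih => simp only [Bl, List.map_cons, List.sum_cons] at *; rw [ih, coeff_zero]; ring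

/-- if a form is balanced for the five generators, it is balanced for all of `R₁`. -/
private lemma Bl_balanced (L)
    (h20 : ∀ f g : MvPolynomial (Fin 2) k,
      Bl L ((X 0 ^ 2 * X 1 ^ 0) * f) g = Bl L f ((X 0 ^ 2 * X 1 ^ 0) * g))
    (h11 : ∀ f g : MvPolynomial (Fin 2) k,
      Bl L ((X 0 ^ 1 * X 1 ^ 1) * f) g = Bl L f ((X 0 ^ 1 * X 1 ^ 1) * g))
    (h02 : ∀ f g : MvPolynomial (Fin 2) k,
      Bl L ((X 0 ^ 0 * X 1 ^ 2) * f) g = Bl L f ((X 0 ^ 0 * X 1 ^ 2) * g))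
    (h30 : ∀ f g : MvPolynomial (Fin 2) k,
      Bl L ((X 0 ^ 3 * X 1 ^ 0) * f) g = Bl L f ((X 0 ^ 3 * X 1 ^ 0) * g))
    (h03 : ∀ f g : MvPolynomial (Fin 2) k,
      Bl L ((X 0 ^ 0 * X 1 ^ 3) * f) g = Bl L f ((X 0 ^ 0 * X 1 ^ 3) * g))
    (r : MvPolynomial (Fin 2) k) (hr : r ∈ R₁alg k) :
    ∀ f g : MvPolynomial (Fin 2) k, Bl L (r * f) g = Bl L f (r * g) := by
  induction hr using Algebra.adjoin_induction with
  | mem x hx =>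
    simp only [Set.mem_insert_iff, Set.mem_singleton_iff] at hx
    rcases hx with rfl | rfl | rfl | rfl | rfl
    · intro f g; have := h20 f g; simpa using this
    · intro f g; have := h11 f g; simpa using this
    · intro f g; have := h02 f g; simpa using this
    · intro f g; have := h30 f g; simpa using this
    · intro f g; have := h03 f g; simpa using this
  | algebraMap c =>
    intro f g
    rw [show (algebraMap k (MvPolynomial (Fin 2) k)) c = C c from rfl, Bl_C_left, Bl_C_right]
  | add x y _ _ hx hy =>
    intro f g
    rw [add_mul, add_mul, Bl_add_left, Bl_add_right, hx, hy]
  | mul x y _ _ hx hy =>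
    intro f g
    calc Bl L (x * y * f) g = Bl L (x * (y * f)) g := by rw [mul_assoc]
      _ = Bl L (y * f) (x * g) := hx _ _
      _ = Bl L f (y * (x * g)) := hy _ _
      _ = Bl L f (x * y * g) := by rw [mul_left_comm, ← mul_assoc]

private noncomputable def BlHom (L : List ((ℕ × ℕ) × (ℕ × ℕ))) :
    MvPolynomial (Fin 2) k →+ MvPolynomial (Fin 2) k →+ k where
  toFun f := { toFun := fun g => Bl L f g
               map_zero' := Bl_zero_right L f
               map_add' := Bl_add_right L f }
  map_zero' := AddMonoidHom.ext fun g => Bl_zero_left L g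
  map_add' f f' := AddMonoidHom.ext fun g => Bl_add_left L f f' g

private lemma BlHom_balanced (L)
    (hbal : ∀ (r : MvPolynomial (Fin 2) k), r ∈ R₁alg k →
      ∀ f g : MvPolynomial (Fin 2) k, Bl L (r * f) g = Bl L f (r * g)) :
    ∀ (r : R₁alg k) (f g : MvPolynomial (Fin 2) k),
      BlHom L (r • f) g = BlHom L f (r • g) := by
  intro r f g
  show Bl L (r • f) g = Bl L f (r • g)
  rw [Subalgebra.smul_def, Subalgebra.smul_def, smul_eq_mul, smul_eq_mul]
  exact hbal r r.2 f g

private lemma coeff_one_ee (a b : ℕ) (h : ¬(a = 0 ∧ b = 0)) :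
    coeff (ee a b) (1 : MvPolynomial (Fin 2) k) = 0 := by
  rw [coeff_one, if_neg]
  intro heq
  refine h ⟨?_, ?_⟩
  · have := congrArg (fun d => d 0) heq; simpa [ee_apply0] using this.symm
  · have := congrArg (fun d => d 1) heq; simpa [ee_apply1] using this.symm

set_option maxHeartbeats 4000000 in
set_option synthInstance.maxHeartbeats 1000000 in
private lemma strictlyClosed_lem :
    IsStrictlyClosedIn (R₁alg k) (MvPolynomial (Fin 2) k) := by
  intro s hs
  have bal1 := Bl_balanced (k := k) [((1,0),(0,0))]
    (by intro f g; simp only [Bl, List.map_cons, List.map_nil, List.sum_cons, List.sum_nil,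
          coeff_ee]; norm_num)
    (by intro f g; simp only [Bl, List.map_cons, List.map_nil, List.sum_cons, List.sum_nil,
          coeff_ee]; norm_num)
    (by intro f g; simp only [Bl, List.map_cons, List.map_nil, List.sum_cons, List.sum_nil,
          coeff_ee]; norm_num)
    (by intro f g; simp only [Bl, List.map_cons, List.map_nil, List.sum_cons, List.sum_nil,
          coeff_ee]; norm_num)
    (by intro f g; simp only [Bl, List.map_cons, List.map_nil, List.sum_cons, List.sum_nil,
          coeff_ee]; norm_num)
  have bal2 := Bl_balanced (k := k) [((0,1),(0,0))]
    (by intro f g; simp only [Bl, List.map_cons, List.map_nil, List.sum_cons, List.sum_nil,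
          coeff_ee]; norm_num)
    (by intro f g; simp only [Bl, List.map_cons, List.map_nil, List.sum_cons, List.sum_nil,
          coeff_ee]; norm_num)
    (by intro f g; simp only [Bl, List.map_cons, List.map_nil, List.sum_cons, List.sum_nil,
          coeff_ee]; norm_num)
    (by intro f g; simp only [Bl, List.map_cons, List.map_nil, List.sum_cons, List.sum_nil,
          coeff_ee]; norm_num)
    (by intro f g; simp only [Bl, List.map_cons, List.map_nil, List.sum_cons, List.sum_nil,
          coeff_ee]; norm_num)
  have bal3 := Bl_balanced (k := k) [((2,1),(0,0)), ((0,1),(2,0)), ((1,0),(1,1))]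
    (by intro f g; simp only [Bl, List.map_cons, List.map_nil, List.sum_cons, List.sum_nil,
          coeff_ee]; norm_num)
    (by intro f g; simp only [Bl, List.map_cons, List.map_nil, List.sum_cons, List.sum_nil,
          coeff_ee]; norm_num)
    (by intro f g; simp only [Bl, List.map_cons, List.map_nil, List.sum_cons, List.sum_nil,
          coeff_ee]; norm_num)
    (by intro f g; simp only [Bl, List.map_cons, List.map_nil, List.sum_cons, List.sum_nil,
          coeff_ee]; norm_num)
    (by intro f g; simp only [Bl, List.map_cons, List.map_nil, List.sum_cons, List.sum_nil,
          coeff_ee]; norm_num)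
  have bal4 := Bl_balanced (k := k) [((1,2),(0,0)), ((1,0),(0,2)), ((0,1),(1,1))]
    (by intro f g; simp only [Bl, List.map_cons, List.map_nil, List.sum_cons, List.sum_nil,
          coeff_ee]; norm_num)
    (by intro f g; simp only [Bl, List.map_cons, List.map_nil, List.sum_cons, List.sum_nil,
          coeff_ee]; norm_num)
    (by intro f g; simp only [Bl, List.map_cons, List.map_nil, List.sum_cons, List.sum_nil,
          coeff_ee]; norm_num)
    (by intro f g; simp only [Bl, List.map_cons, List.map_nil, List.sum_cons, List.sum_nil,
          coeff_ee]; norm_num)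
    (by intro f g; simp only [Bl, List.map_cons, List.map_nil, List.sum_cons, List.sum_nil,
          coeff_ee]; norm_num)
  have key : ∀ (L : List ((ℕ × ℕ) × (ℕ × ℕ)))
      (_ : ∀ (r : MvPolynomial (Fin 2) k), r ∈ R₁alg k →
        ∀ f g, Bl L (r * f) g = Bl L f (r * g)), Bl L s 1 = Bl L 1 s := by
    intro L hbal
    have := congrArg (TensorProduct.liftAddHom (BlHom L)
      (fun r f g => BlHom_balanced L hbal r f g)) hs
    have h' : (BlHom L) s 1 = (BlHom L) 1 s := by simpa using this
    exact h'
  have h1 := key _ bal1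
  have h2 := key _ bal2
  have h3 := key _ bal3
  have h4 := key _ bal4
  simp only [Bl, List.map_cons, List.map_nil, List.sum_cons, List.sum_nil, ee_zero,
    coeff_zero_one, coeff_one_ee 1 0 (by omega), coeff_one_ee 0 1 (by omega),
    coeff_one_ee 2 1 (by omega), coeff_one_ee 1 2 (by omega), coeff_one_ee 2 0 (by omega),
    coeff_one_ee 1 1 (by omega), coeff_one_ee 0 2 (by omega),
    mul_one, mul_zero, zero_mul, add_zero, zero_add] at h1 h2 h3 h4
  have hmem : s ∈ R₁alg k := by
    rw [s.as_sum]
    refine sum_mem fun d hd => ?_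
    rw [monomial_eq_prod]
    refine mul_mem ((R₁alg k).algebraMap_mem' _) (mono_mem k _ _ ?_)
    have hcoe : ∀ a b : ℕ, d 0 = a → d 1 = b → d = ee a b := by
      intro a b h0 h1
      ext i; fin_cases i
      · show d 0 = ee a b 0
        rw [ee_apply0]; exact h0
      · show d 1 = ee a b 1
        rw [ee_apply1]; exact h1
    rintro (⟨hd0, hd1⟩ | ⟨hd0, hd1⟩ | ⟨hd0, hd1⟩ | ⟨hd0, hd1⟩) <;>
      rw [mem_support_iff, hcoe _ _ hd0 hd1] at hd <;>
      first
        | exact hd h1 | exact hd h2 | exact hd h3 | exact hd h4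
  exact ⟨⟨s, hmem⟩, rfl⟩

end StrictClosure

section WeakArf

open MvPolynomial

variable (k : Type*) [Field k]

set_option maxHeartbeats 1000000 in
set_option synthInstance.maxHeartbeats 1000000 in
private lemma weaklyArf_lem : IsWeaklyArf (R₁alg k) := by
  classical
  intro x y z hx hy hz
  letI : Algebra (R₁alg k) (FractionRing (MvPolynomial (Fin 2) k)) :=
    ((algebraMap (MvPolynomial (Fin 2) k) (FractionRing (MvPolynomial (Fin 2) k))).comp
      (R₁alg k).val.toRingHom).toAlgebra
  haveI hFR : IsFractionRing (R₁alg k) (FractionRing (MvPolynomial (Fin 2) k)) :=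
    lemA k (FractionRing (MvPolynomial (Fin 2) k))
  let ψ : FractionRing (R₁alg k) ≃ₐ[R₁alg k] FractionRing (MvPolynomial (Fin 2) k) :=
    IsLocalization.algEquiv (nonZeroDivisors (R₁alg k)) _ _
  obtain ⟨u, hu, hux⟩ := hy
  obtain ⟨v, hv, hvx⟩ := hz
  have hinjS := IsFractionRing.injective (MvPolynomial (Fin 2) k)
    (FractionRing (MvPolynomial (Fin 2) k))
  have hu2 : ψ u ∈ integralClosure (R₁alg k) (FractionRing (MvPolynomial (Fin 2) k)) :=
    (isIntegral_algEquiv ψ).mpr hu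
  have hu3 : (ψ u : FractionRing (MvPolynomial (Fin 2) k))
      ∈ Set.range (algebraMap (MvPolynomial (Fin 2) k)
        (FractionRing (MvPolynomial (Fin 2) k))) := by
    rw [← lemB k (FractionRing (MvPolynomial (Fin 2) k))]; exact hu2
  obtain ⟨p, hp0⟩ := hu3
  have hv2 : ψ v ∈ integralClosure (R₁alg k) (FractionRing (MvPolynomial (Fin 2) k)) :=
    (isIntegral_algEquiv ψ).mpr hv
  have hv3 : (ψ v : FractionRing (MvPolynomial (Fin 2) k))
      ∈ Set.range (algebraMap (MvPolynomial (Fin 2) k)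
        (FractionRing (MvPolynomial (Fin 2) k))) := by
    rw [← lemB k (FractionRing (MvPolynomial (Fin 2) k))]; exact hv2
  obtain ⟨q, hq0⟩ := hv3
  have halg : ∀ w : R₁alg k, algebraMap (R₁alg k) (FractionRing (MvPolynomial (Fin 2) k)) w
      = algebraMap (MvPolynomial (Fin 2) k) (FractionRing (MvPolynomial (Fin 2) k)) ↑w :=
    fun w => rfl
  have hp : p * ↑x = (↑y : MvPolynomial (Fin 2) k) := by
    apply hinjS
    rw [map_mul, hp0]
    have := congrArg ψ hux
    rw [map_mul, ψ.commutes, ψ.commutes] at this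
    rw [← halg, ← halg]
    exact this
  have hq : q * ↑x = (↑z : MvPolynomial (Fin 2) k) := by
    apply hinjS
    rw [map_mul, hq0]
    have := congrArg ψ hvx
    rw [map_mul, ψ.commutes, ψ.commutes] at this
    rw [← halg, ← halg]
    exact this
  have sm : ∀ (r : R₁alg k) (f : MvPolynomial (Fin 2) k), r • f = ↑r * f := fun r f => by
    rw [Subalgebra.smul_def, smul_eq_mul]
  have hul : (p * q * ↑x) ⊗ₜ[R₁alg k] (1 : MvPolynomial (Fin 2) k)
      = (1 : MvPolynomial (Fin 2) k) ⊗ₜ[R₁alg k] (p * q * ↑x) := by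
    calc (p * q * ↑x) ⊗ₜ[R₁alg k] (1 : MvPolynomial (Fin 2) k)
        = (z • p) ⊗ₜ[R₁alg k] (1 : MvPolynomial (Fin 2) k) := by
          rw [show z • p = p * q * (↑x : MvPolynomial (Fin 2) k) from by rw [sm, ← hq]; ring]
      _ = p ⊗ₜ[R₁alg k] (z • 1) := TensorProduct.smul_tmul _ _ _
      _ = p ⊗ₜ[R₁alg k] (x • q) := by
          rw [show (z • (1 : MvPolynomial (Fin 2) k)) = x • q from by
            rw [sm, sm, mul_one, ← hq]; ring]
      _ = (x • p) ⊗ₜ[R₁alg k] q := (TensorProduct.smul_tmul _ _ _).symm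
      _ = (y • (1 : MvPolynomial (Fin 2) k)) ⊗ₜ[R₁alg k] q := by
          rw [show (x • p : MvPolynomial (Fin 2) k) = y • 1 from by
            rw [sm, sm, mul_one, ← hp]; ring]
      _ = (1 : MvPolynomial (Fin 2) k) ⊗ₜ[R₁alg k] (y • q) := TensorProduct.smul_tmul _ _ _
      _ = (1 : MvPolynomial (Fin 2) k) ⊗ₜ[R₁alg k] (p * q * ↑x) := by
          rw [show (y • q : MvPolynomial (Fin 2) k) = p * q * ↑x from by rw [sm, ← hp]; ring]
  obtain ⟨r, hr⟩ := strictlyClosed_lem (k := k) _ hul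
  refine ⟨r, ?_⟩
  have hrx : r * x = y * z := by
    apply Subtype.val_injective
    push_cast
    have hr' : (↑r : MvPolynomial (Fin 2) k) = p * q * ↑x := hr
    rw [hr', ← hp, ← hq]
    ring
  rw [← map_mul, hrx]

end WeakArf

set_option synthInstance.maxHeartbeats 1000000 in
set_option maxHeartbeats 1000000 in
/-- Let `S = k[X, Y]` and `R₁ = k[X², XY, Y², X³, Y³] ⊆ S`.  Then the
fraction field of `S` is a fraction field of `R₁`, `S` is the integral closure of `R₁` in it,
and `R₁` is strictly closed in `S`, hence weakly Arf. -/
theorem R₁alg_strictlyClosed_weaklyArf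
    (k : Type*) [Field k]
    (K : Type*) [Field K] [Algebra (MvPolynomial (Fin 2) k) K]
    [IsFractionRing (MvPolynomial (Fin 2) k) K] :
    (letI : Algebra (R₁alg k) K :=
      ((algebraMap (MvPolynomial (Fin 2) k) K).comp (R₁alg k).val.toRingHom).toAlgebra
     IsFractionRing (R₁alg k) K ∧
       (integralClosure (R₁alg k) K : Set K)
         = Set.range (algebraMap (MvPolynomial (Fin 2) k) K)) ∧
    IsStrictlyClosedIn (R₁alg k) (MvPolynomial (Fin 2) k) ∧
    IsWeaklyArf (R₁alg k) := by
  exact ⟨⟨lemA k K, lemB k K⟩, strictlyClosed_lem, weaklyArf_lem k⟩
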